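/- The minimum over all u ∈ H with u not identically zero of the Rayleigh quotient (Σ_{k=1}^{T+1} (u(k) - u(k-1))^2) / (Σ_{k=1}^{T} u(k)^2) equals 4 sin^2(π / (2(T+1))). -/

import Mathlib

open Real

lemma sum_Icc_one_eq_range (n : ℕ) (f : ℕ → ℝ) :
    ∑ i ∈ Finset.Icc 1 n, f i = ∑ i ∈ Finset.range n, f (i + 1) := by
  induction n with
  | zero => simp
  | succ n ih =>
    rw [Finset.sum_Icc_succ_top (by omega : 1 ≤ n + 1), ih, Finset.sum_range_succ]

lemma trig_rec (θ : ℝ) (x : ℝ) :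
    Real.sin x + Real.sin (x + 2 * θ) = 2 * Real.cos θ * Real.sin (x + θ) := by
  have h1 : x = (x + θ) - θ := by ring
  have h2 : x + 2 * θ = (x + θ) + θ := by ring
  rw [h2, Real.sin_add]
  nth_rewrite 1 [h1]
  rw [Real.sin_sub]
  ring

/-- Summation by parts: expansion of the Dirichlet energy under zero boundary data. -/
lemma energy_expand (T : ℕ) (u : ℕ → ℝ) (h0 : u 0 = 0) (hT : u (T + 1) = 0) :
    ∑ i ∈ Finset.range (T + 1), (u (i + 1) - u i) ^ 2 =
      2 * ∑ i ∈ Finset.range T, u (i + 1) ^ 2 -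
      2 * ∑ i ∈ Finset.range T, u (i + 1) * u i := by
  have hexp : ∀ i ∈ Finset.range (T + 1),
      (u (i + 1) - u i) ^ 2 = u (i + 1) ^ 2 + u i ^ 2 - 2 * (u (i + 1) * u i) := by
    intro i _; ring
  rw [Finset.sum_congr rfl hexp]
  rw [Finset.sum_sub_distrib, Finset.sum_add_distrib, ← Finset.mul_sum]
  rw [Finset.sum_range_succ (fun i => u (i + 1) ^ 2), Finset.sum_range_succ'
    (fun i => u i ^ 2), Finset.sum_range_succ (fun i => u (i + 1) * u i)]
  rw [h0, hT]
  ring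

/-- The minimum over nonzero `u ∈ H` of the Rayleigh quotient
`(∑_{k=1}^{T+1} (Δu(k-1))²)/(∑_{k=1}^T u(k)²)` equals `4 sin²(π/(2(T+1)))`. -/
theorem discrete_first_eigenvalue
    (T : ℕ) (hT : 2 ≤ T) :
    IsLeast
      {r : ℝ | ∃ u : ℕ → ℝ, u 0 = 0 ∧ u (T + 1) = 0 ∧
        (∃ k ∈ Finset.Icc 1 T, u k ≠ 0) ∧
        r = (∑ k ∈ Finset.Icc 1 (T + 1), (u k - u (k - 1)) ^ 2) /
            (∑ k ∈ Finset.Icc 1 T, (u k) ^ 2)}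
      (4 * Real.sin (Real.pi / (2 * ((T : ℝ) + 1))) ^ 2) := by
  -- setup
  set θ : ℝ := Real.pi / ((T : ℝ) + 1) with hθ
  have hT1pos : (0 : ℝ) < (T : ℝ) + 1 := by positivity
  have hθpos : 0 < θ := by
    apply div_pos Real.pi_pos hT1pos
  set s : ℕ → ℝ := fun k => Real.sin ((k : ℝ) * θ) with hs
  set c : ℝ := Real.cos θ with hc
  set lam : ℝ := 4 * Real.sin (Real.pi / (2 * ((T : ℝ) + 1))) ^ 2 with hlam
  -- λ = 2 - 2 cos θ
  have hhalf : Real.pi / (2 * ((T : ℝ) + 1)) = θ / 2 := by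
    rw [hθ, div_div, mul_comm]
  have hlam2 : lam = 2 - 2 * c := by
    rw [hlam, hhalf, hc, Real.sin_sq_eq_half_sub]
    rw [show 2 * (θ / 2) = θ by ring]
    ring
  -- s (T+1) = 0
  have hsT1 : s (T + 1) = 0 := by
    rw [hs]
    simp only []
    push_cast
    rw [hθ, show ((T : ℝ) + 1) * (Real.pi / ((T : ℝ) + 1)) = Real.pi by
      field_simp]
    exact Real.sin_pi
  -- positivity of s k for 1 ≤ k ≤ T
  have hspos : ∀ k : ℕ, 1 ≤ k → k ≤ T → 0 < s k := by
    intro k hk1 hkT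
    apply Real.sin_pos_of_pos_of_lt_pi
    · have : (1 : ℝ) ≤ (k : ℝ) := by exact_mod_cast hk1
      nlinarith
    · have hk : (k : ℝ) ≤ (T : ℝ) := by exact_mod_cast hkT
      have h1 : (k : ℝ) * θ ≤ (T : ℝ) * θ := by nlinarith
      have h2 : ((T : ℝ) + 1) * θ = Real.pi := by
        rw [hθ]; field_simp
      nlinarith
  -- the recurrence s i + s (i+2) = 2 c s (i+1)
  have hrec : ∀ i : ℕ, s i + s (i + 2) = 2 * c * s (i + 1) := by
    intro i
    rw [hs, hc]
    simp only []
    push_cast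
    have := trig_rec θ ((i : ℝ) * θ)
    rw [show ((i : ℝ) + 2) * θ = (i : ℝ) * θ + 2 * θ by ring,
      show ((i : ℝ) + 1) * θ = (i : ℝ) * θ + θ by ring]
    exact this
  have hs0 : s 0 = 0 := by rw [hs]; simp
  -- cross-sum bound: key inequality
  have key : ∀ u : ℕ → ℝ, u 0 = 0 →
      ∑ i ∈ Finset.range T, u (i + 1) * u i ≤ c * ∑ i ∈ Finset.range T, u (i + 1) ^ 2 := by
    intro u h0
    obtain ⟨T', rfl⟩ : ∃ T', T = T' + 1 := ⟨T - 1, by omega⟩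
    set P : ℕ → ℝ := fun i => (s i / s (i + 1)) * u (i + 1) ^ 2 with hP
    set Q : ℕ → ℝ := fun i => (s (i + 1) / s i) * u i ^ 2 with hQ
    have step1 : ∀ i ∈ Finset.range (T' + 1), 2 * (u (i + 1) * u i) ≤ P i + Q i := by
      intro i hi
      rw [Finset.mem_range] at hi
      rcases Nat.eq_zero_or_pos i with h | h
      · subst h
        simp [hP, hQ, h0, hs0]
      · have h1 : 0 < s i := hspos i h (by omega)
        have h2 : 0 < s (i + 1) := hspos (i + 1) (by omega) (by omega)
        have hsq := sq_nonneg (s i * u (i + 1) - s (i + 1) * u i)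
        rw [hP, hQ]
        simp only []
        rw [div_mul_eq_mul_div, div_mul_eq_mul_div, div_add_div _ _ (ne_of_gt h2) (ne_of_gt h1),
          le_div_iff₀ (by positivity)]
        nlinarith
    have step2 : ∑ i ∈ Finset.range (T' + 1), (P i + Q i) =
        2 * c * ∑ i ∈ Finset.range (T' + 1), u (i + 1) ^ 2 := by
      have hQ0 : Q 0 = 0 := by rw [hQ]; simp [h0]
      have hmid : ∀ i ∈ Finset.range T', P i + Q (i + 1) = 2 * c * u (i + 1) ^ 2 := by
        intro i hi
        rw [Finset.mem_range] at hi
        have h2 : 0 < s (i + 1) := hspos (i + 1) (by omega) (by omega)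
        have hr := hrec i
        rw [hP, hQ]
        simp only []
        rw [div_mul_eq_mul_div, div_mul_eq_mul_div, ← add_div, div_eq_iff (ne_of_gt h2)]
        linear_combination (u (i + 1) ^ 2) * hr
      have hlast : P T' = 2 * c * u (T' + 1) ^ 2 := by
        have h2 : 0 < s (T' + 1) := hspos (T' + 1) (by omega) (by omega)
        have hr := hrec T'
        have hz : s (T' + 2) = 0 := by
          rw [show T' + 2 = T' + 1 + 1 from by omega]; exact hsT1
        rw [hz, add_zero] at hr
        rw [hP]
        simp only []
        rw [div_mul_eq_mul_div, div_eq_iff (ne_of_gt h2)]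
        linear_combination (u (T' + 1) ^ 2) * hr
      have hmidsum : ∑ i ∈ Finset.range T', (P i + Q (i + 1)) =
          2 * c * ∑ i ∈ Finset.range T', u (i + 1) ^ 2 := by
        rw [Finset.sum_congr rfl hmid, Finset.mul_sum]
      rw [Finset.sum_add_distrib, Finset.sum_range_succ P, Finset.sum_range_succ' Q,
        hQ0, add_zero, Finset.sum_range_succ (fun i => u (i + 1) ^ 2), mul_add]
      rw [Finset.sum_add_distrib, Finset.mul_sum] at hmidsum
      rw [hlast]
      rw [Finset.mul_sum]
      linarith
    have hsum := Finset.sum_le_sum step1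
    rw [step2, ← Finset.mul_sum] at hsum
    linarith
  constructor
  · -- membership: take u k = sin (k θ)
    refine ⟨s, hs0, hsT1, ⟨1, by simp [Finset.mem_Icc]; omega, ?_⟩, ?_⟩
    · exact ne_of_gt (hspos 1 le_rfl (by omega))
    · -- Rayleigh quotient of the eigenvector
      have hIccN : ∑ k ∈ Finset.Icc 1 (T + 1), (s k - s (k - 1)) ^ 2 =
          ∑ i ∈ Finset.range (T + 1), (s (i + 1) - s i) ^ 2 := by
        rw [sum_Icc_one_eq_range]
        apply Finset.sum_congr rfl
        intro i _
        norm_num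
      have hIccD : ∑ k ∈ Finset.Icc 1 T, (s k) ^ 2 =
          ∑ i ∈ Finset.range T, s (i + 1) ^ 2 := by
        rw [sum_Icc_one_eq_range]
      rw [hIccN, hIccD, energy_expand T s hs0 hsT1]
      -- telescoping: ∑ s(i+1) s i = c ∑ s(i+1)²
      have htel : ∑ i ∈ Finset.range T, s (i + 1) * s i =
          c * ∑ i ∈ Finset.range T, s (i + 1) ^ 2 := by
        have heq : ∀ i ∈ Finset.range T,
            c * s (i + 1) ^ 2 - s (i + 1) * s i =
              (fun j => s j * s (j + 1) / 2) (i + 1) - (fun j => s j * s (j + 1) / 2) i := by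
          intro i hi
          simp only []
          have hr := hrec i
          linear_combination (-(s (i + 1)) / 2) * hr
        have h2 : ∑ i ∈ Finset.range T, (c * s (i + 1) ^ 2 - s (i + 1) * s i) = 0 := by
          rw [Finset.sum_congr rfl heq, Finset.sum_range_sub (fun j => s j * s (j + 1) / 2)]
          simp only [hs0, hsT1]
          ring
        rw [Finset.sum_sub_distrib, ← Finset.mul_sum] at h2
        linarith
      have hDpos : 0 < ∑ i ∈ Finset.range T, s (i + 1) ^ 2 := by
        apply Finset.sum_pos'
        · intro i _; positivity
        · exact ⟨0, by simp; omega, by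
            have := hspos 1 le_rfl (by omega); positivity⟩
      have hD0 : (∑ i ∈ Finset.range T, s (i + 1) ^ 2) ≠ 0 := ne_of_gt hDpos
      rw [htel, hlam2]
      field_simp
  · -- lower bound
    rintro r ⟨u, h0, hT1, ⟨k, hk, hku⟩, rfl⟩
    rw [Finset.mem_Icc] at hk
    have hIccN : ∑ k ∈ Finset.Icc 1 (T + 1), (u k - u (k - 1)) ^ 2 =
        ∑ i ∈ Finset.range (T + 1), (u (i + 1) - u i) ^ 2 := by
      rw [sum_Icc_one_eq_range]
      apply Finset.sum_congr rfl
      intro i _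
      norm_num
    have hIccD : ∑ k ∈ Finset.Icc 1 T, (u k) ^ 2 =
        ∑ i ∈ Finset.range T, u (i + 1) ^ 2 := by
      rw [sum_Icc_one_eq_range]
    rw [hIccN, hIccD, energy_expand T u h0 hT1]
    have hDpos : 0 < ∑ i ∈ Finset.range T, u (i + 1) ^ 2 := by
      apply Finset.sum_pos'
      · intro i _; positivity
      · exact ⟨k - 1, by simp; omega, by
          have : u (k - 1 + 1) = u k := by congr 1; omega
          rw [this]
          positivity⟩
    rw [hlam2, le_div_iff₀ hDpos]
    have := key u h0
    nlinarith
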